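/- Let V be a finite-dimensional real vector space equipped with null data (γ, ℓ, ℓ⁽²⁾, P, n, n⁽²⁾ = 0) satisfying the four contraction identities, and let S ⊂ V be a codimension-one subspace with n ∉ S, so that h := γ restricted to S × S is nondegenerate. Set ℓ_∥ := ℓ|_S, let ℓ_∥^♯ ∈ S be the vector with h(ℓ_∥^♯, ·) = ℓ_∥, and set ℓ⁽²⁾_∥ := ℓ_∥(ℓ_∥^♯). Let Y be any symmetric bilinear form on V and define κ := −Y(n,n). Then tr_P Y = tr_h Y_∥ − 2·Y(n, ℓ_∥^♯) + κ·(ℓ⁽²⁾ − ℓ⁽²⁾_∥), where Y_∥ is the restriction of Y to S × S. -/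

import Mathlib

open Module

/-- Trace of a rank-one endomorphism `x ↦ φ(x) • v`. -/
lemma trace_smulRight_aux {M : Type*} [AddCommGroup M] [Module ℝ M] [FiniteDimensional ℝ M]
    (φ : M →ₗ[ℝ] ℝ) (v : M) :
    LinearMap.trace ℝ M (LinearMap.smulRight φ v) = φ v := by
  have h : LinearMap.smulRight φ v = (LinearMap.toSpanSingleton ℝ M v) ∘ₗ φ := by
    ext x; simp [LinearMap.toSpanSingleton]
  rw [h, LinearMap.trace_comp_comm']
  have h2 : φ ∘ₗ LinearMap.toSpanSingleton ℝ M v = φ v • LinearMap.id := by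
    ext; simp [LinearMap.toSpanSingleton, mul_comm]
  rw [h2, map_smul, LinearMap.trace_id]
  simp

/-- The vector of `V` corresponding to `P(ρ,·) ∈ V**`, via the canonical
identification `V ≅ V**`. -/
noncomputable def Pvec {V : Type*} [AddCommGroup V] [Module ℝ V] [FiniteDimensional ℝ V]
    (P : LinearMap.BilinForm ℝ (Module.Dual ℝ V)) (ρ : Module.Dual ℝ V) : V :=
  (Module.evalEquiv ℝ V).symm (P ρ)

/-- `tr_P T`: the trace of the endomorphism `X ↦ P(T(X,·),·)` of `V`. -/
noncomputable def trP {V : Type*} [AddCommGroup V] [Module ℝ V] [FiniteDimensional ℝ V]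
    (P : LinearMap.BilinForm ℝ (Module.Dual ℝ V)) (T : LinearMap.BilinForm ℝ V) : ℝ :=
  LinearMap.trace ℝ V ((Module.evalEquiv ℝ V).symm.toLinearMap ∘ₗ P ∘ₗ T)

/-- For null hypersurface data with a transverse codimension-one subspace `S`:
for any symmetric bilinear form `Y`, with `κ = −Y(n,n)`,
`tr_P Y = tr_h Y_∥ − 2·Y(n, ℓ_∥^♯) + κ·(ℓ⁽²⁾ − ℓ⁽²⁾_∥)`, where `ℓ_∥^♯ ∈ S` is the vector
with `h(ℓ_∥^♯,·) = ℓ|_S`, `ℓ⁽²⁾_∥ = ℓ(ℓ_∥^♯)`, and `tr_h Y_∥` is the trace of the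
endomorphism `F = h⁻¹ ∘ Y_∥` of `S`. -/
theorem trP_Y_decomposition {V : Type*} [AddCommGroup V] [Module ℝ V]
    [FiniteDimensional ℝ V]
    (γ : LinearMap.BilinForm ℝ V) (hγsym : ∀ X Y : V, γ X Y = γ Y X)
    (ℓ : Module.Dual ℝ V) (ℓ2 : ℝ)
    (P : LinearMap.BilinForm ℝ (Module.Dual ℝ V)) (hPsym : ∀ α β, P α β = P β α)
    (n : V) (n2 : ℝ) (hn2 : n2 = 0)
    (h1 : γ n + n2 • ℓ = 0)
    (h2 : ℓ n + n2 * ℓ2 = 1)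
    (h3 : Pvec P ℓ + ℓ2 • n = 0)
    (h4 : ∀ X : V, Pvec P (γ X) + ℓ X • n = X)
    (S : Submodule ℝ V)
    (hcodim : Module.finrank ℝ S + 1 = Module.finrank ℝ V) (hnS : n ∉ S)
    (Y : LinearMap.BilinForm ℝ V) (hYsym : ∀ X Z : V, Y X Z = Y Z X) :
    (∃! lsharp : S, ∀ x : S, γ (lsharp : V) (x : V) = ℓ (x : V)) ∧
    (∃! F : S →ₗ[ℝ] S, ∀ x y : S, γ (F x : V) (y : V) = Y (x : V) (y : V)) ∧
    (∀ (lsharp : S), (∀ x : S, γ (lsharp : V) (x : V) = ℓ (x : V)) →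
      ∀ F : S →ₗ[ℝ] S, (∀ x y : S, γ (F x : V) (y : V) = Y (x : V) (y : V)) →
        trP P Y = LinearMap.trace ℝ S F - 2 * Y n (lsharp : V)
          + (-(Y n n)) * (ℓ2 - ℓ (lsharp : V))) := by
  subst hn2
  rw [zero_smul, add_zero] at h1
  rw [zero_mul, add_zero] at h2
  -- basic facts
  have hn0 : n ≠ 0 := by
    intro h; rw [h, map_zero] at h2; exact one_ne_zero h2.symm
  have hγn : ∀ v : V, γ v n = 0 := fun v => by rw [hγsym, h1]; rfl
  have h4' : ∀ X : V, Pvec P (γ X) = X - ℓ X • n := fun X => eq_sub_of_add_eq (h4 X)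
  have h3' : Pvec P ℓ = -(ℓ2 • n) := eq_neg_of_add_eq_zero_left h3
  -- complement structure
  have hdisj : Disjoint S (ℝ ∙ n) := by
    rw [disjoint_iff]
    rw [Submodule.eq_bot_iff]
    rintro x ⟨hxS, hxn⟩
    obtain ⟨c, rfl⟩ := Submodule.mem_span_singleton.1 hxn
    rcases eq_or_ne c 0 with rfl | hc
    · simp
    · exact absurd (by simpa [hc] using S.smul_mem c⁻¹ hxS) hnS
  have hsup : S ⊔ (ℝ ∙ n) = ⊤ := by
    apply Submodule.eq_top_of_finrank_eq
    have e1 := Submodule.finrank_sup_add_finrank_inf_eq S (ℝ ∙ n)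
    rw [disjoint_iff.1 hdisj, finrank_bot, add_zero, finrank_span_singleton hn0] at e1
    rw [e1]
    exact hcodim
  have hcompl : IsCompl S (ℝ ∙ n) := ⟨hdisj, codisjoint_iff.2 hsup⟩
  have hmem : ∀ v : V, ∃ y ∈ S, ∃ c : ℝ, v = y + c • n := by
    intro v
    have : v ∈ S ⊔ (ℝ ∙ n) := hsup.symm ▸ Submodule.mem_top
    obtain ⟨y, hy, z, hz, rfl⟩ := Submodule.mem_sup.1 this
    obtain ⟨c, rfl⟩ := Submodule.mem_span_singleton.1 hz
    exact ⟨y, hy, c, rfl⟩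
  -- injectivity of γ restricted to S
  have hinj0 : ∀ x : S, (∀ y : S, γ (x : V) (y : V) = 0) → x = 0 := by
    intro x hx
    have hγx : γ (x : V) = 0 := by
      apply LinearMap.ext; intro v
      obtain ⟨y, hy, c, rfl⟩ := hmem v
      simp [map_add, map_smul, hγn, hx ⟨y, hy⟩]
    have := h4 (x : V)
    rw [hγx] at this
    have hP0 : Pvec P (0 : Module.Dual ℝ V) = 0 := by
      show (Module.evalEquiv ℝ V).symm (P 0) = 0
      rw [map_zero]
      exact (Module.evalEquiv ℝ V).symm.map_zero
    rw [hP0, zero_add] at this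
    rcases eq_or_ne (ℓ (x : V)) 0 with h0 | h0
    · have hx0 : (x : V) = 0 := by rw [← this, h0, zero_smul]
      exact Subtype.ext (by rw [hx0]; rfl)
    · exfalso; apply hnS
      have hxx : (ℓ (x:V))⁻¹ • (ℓ (x:V) • n) = n := by
        rw [smul_smul, inv_mul_cancel₀ h0, one_smul]
      rw [← hxx, this]
      exact S.smul_mem _ x.2
  -- the musical map Φ : S → Dual S
  set Φ : S →ₗ[ℝ] Module.Dual ℝ S := γ.compl₁₂ S.subtype S.subtype with hΦ
  have hΦapp : ∀ x y : S, Φ x y = γ (x : V) (y : V) := fun x y => rfl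
  have hΦinj : Function.Injective Φ := by
    rw [← LinearMap.ker_eq_bot, Submodule.eq_bot_iff]
    intro x hx
    exact hinj0 x fun y => by rw [← hΦapp]; rw [LinearMap.mem_ker] at hx; rw [hx]; rfl
  have hΦsurj : Function.Surjective Φ :=
    (LinearMap.injective_iff_surjective_of_finrank_eq_finrank
      (Subspace.dual_finrank_eq (V := S)).symm).1 hΦinj
  -- part 1 : lsharp
  obtain ⟨ls, hls⟩ := hΦsurj (ℓ.comp S.subtype)
  have hlsp : ∀ x : S, γ (ls : V) (x : V) = ℓ (x : V) := by
    intro x; rw [← hΦapp, hls]; rfl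
  have part1 : ∃! lsharp : S, ∀ x : S, γ (lsharp : V) (x : V) = ℓ (x : V) := by
    refine ⟨ls, hlsp, fun w hw => ?_⟩
    apply hΦinj; apply LinearMap.ext; intro y
    rw [hΦapp, hΦapp, hw y, hlsp y]
  -- part 2 : F
  have ΦE : S ≃ₗ[ℝ] Module.Dual ℝ S := LinearEquiv.ofBijective Φ ⟨hΦinj, hΦsurj⟩
  set Ψ : S →ₗ[ℝ] Module.Dual ℝ S := Y.compl₁₂ S.subtype S.subtype with hΨ
  set F0 : S →ₗ[ℝ] S :=
    (LinearEquiv.ofBijective Φ ⟨hΦinj, hΦsurj⟩).symm.toLinearMap ∘ₗ Ψ with hF0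
  have hF0p : ∀ x y : S, γ (F0 x : V) (y : V) = Y (x : V) (y : V) := by
    intro x y
    rw [← hΦapp]
    have : Φ (F0 x) = Ψ x := by
      simp only [hF0, LinearMap.comp_apply, LinearEquiv.coe_coe]
      exact (LinearEquiv.ofBijective Φ ⟨hΦinj, hΦsurj⟩).apply_symm_apply (Ψ x)
    rw [this]; rfl
  have part2 : ∃! F : S →ₗ[ℝ] S, ∀ x y : S, γ (F x : V) (y : V) = Y (x : V) (y : V) := by
    refine ⟨F0, hF0p, fun G hG => ?_⟩
    apply LinearMap.ext; intro x
    apply hΦinj; apply LinearMap.ext; intro y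
    rw [hΦapp, hΦapp, hG x y, hF0p x y]
  refine ⟨part1, part2, ?_⟩
  -- part 3 : trace computation
  intro lsharp hlsharp F hF
  -- key functional decomposition
  have hfun : ∀ (X : V) (w : S), (∀ y : S, γ (w : V) (y : V) = Y X (y : V) - Y X n * ℓ (y : V)) →
      Y X = γ (w : V) + Y X n • ℓ := by
    intro X w hw
    apply LinearMap.ext; intro v
    obtain ⟨y, hy, c, rfl⟩ := hmem v
    have := hw ⟨y, hy⟩
    simp only [map_add, map_smul, LinearMap.add_apply, LinearMap.smul_apply, smul_eq_mul] at *
    rw [this, hγn, h2]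
    ring
  have hkey : ∀ (X : V) (w : S), Y X = γ (w : V) + Y X n • ℓ →
      Pvec P (Y X) = (w : V) - (ℓ (w : V) + Y X n * ℓ2) • n := by
    intro X w hYX
    have heval : (γ (w : V) + Y X n • ℓ) n = Y X n := by
      simp only [LinearMap.add_apply, LinearMap.smul_apply, smul_eq_mul, hγn, h2, mul_one,
        zero_add]
    have hadd : Pvec P (γ (w : V) + Y X n • ℓ)
        = Pvec P (γ (w : V)) + Y X n • Pvec P ℓ := by
      simp [Pvec, map_add, map_smul]
    rw [hYX, heval, hadd, h4' (w : V), h3']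
    rw [add_smul, smul_neg, smul_smul]
    abel
  -- projections
  set π : V →ₗ[ℝ] S := S.projectionOnto (ℝ ∙ n) hcompl with hπ
  set μ : V →ₗ[ℝ] (ℝ ∙ n : Submodule ℝ V) := (ℝ ∙ n).projectionOnto S hcompl.symm with hμ
  set lam : V →ₗ[ℝ] ℝ := (LinearEquiv.coord ℝ V n hn0).toLinearMap ∘ₗ μ with hlam
  have hdecomp : ∀ v : V, v = (π v : V) + lam v • n := by
    intro v
    have h5 := Submodule.projection_add_projection_eq_self hcompl v
    have h6 : lam v • n = ((μ v : (ℝ ∙ n : Submodule ℝ V)) : V) := by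
      simpa [hlam] using LinearEquiv.coord_apply_smul ℝ V n hn0 (μ v)
    rw [h6]; exact h5.symm
  have hπS : ∀ w : S, π (w : V) = w := fun w => Submodule.linearProjOfIsCompl_apply_left hcompl w
  have hπn : π n = 0 := Submodule.linearProjOfIsCompl_apply_right' hcompl
    (Submodule.mem_span_singleton_self n)
  have hlamS : ∀ w : S, lam (w : V) = 0 := by
    intro w
    simp only [hlam, LinearMap.comp_apply]
    rw [hμ, Submodule.linearProjOfIsCompl_apply_right' hcompl.symm w.2]
    simp
  have hlamn : lam n = 1 := by
    have : μ n = ⟨n, Submodule.mem_span_singleton_self n⟩ := by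
      rw [hμ]
      exact Submodule.linearProjOfIsCompl_apply_left hcompl.symm
        ⟨n, Submodule.mem_span_singleton_self n⟩
    simp only [hlam, LinearMap.comp_apply, this, LinearEquiv.coe_coe]
    exact LinearEquiv.coord_self ℝ V n hn0
  -- the endomorphism E
  set E : V →ₗ[ℝ] V := (Module.evalEquiv ℝ V).symm.toLinearMap ∘ₗ P ∘ₗ Y with hE
  have hEapp : ∀ X : V, E X = Pvec P (Y X) := fun X => rfl
  have hid : LinearMap.id (R := ℝ) (M := V)
      = S.subtype ∘ₗ π + LinearMap.smulRight lam n := by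
    apply LinearMap.ext; intro v
    simpa using hdecomp v
  have htr : trP P Y = LinearMap.trace ℝ S (π ∘ₗ E ∘ₗ S.subtype) + lam (E n) := by
    have : trP P Y = LinearMap.trace ℝ V (E ∘ₗ (S.subtype ∘ₗ π))
        + LinearMap.trace ℝ V (E ∘ₗ LinearMap.smulRight lam n) := by
      rw [trP, ← hE]
      conv_lhs => rw [show E = E ∘ₗ LinearMap.id from rfl, hid]
      rw [LinearMap.comp_add, map_add]
    rw [this]
    congr 1
    · rw [show E ∘ₗ (S.subtype ∘ₗ π) = (E ∘ₗ S.subtype) ∘ₗ π from rfl,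
        LinearMap.trace_comp_comm']
    · have : E ∘ₗ LinearMap.smulRight lam n = LinearMap.smulRight lam (E n) := by
        apply LinearMap.ext; intro v; simp
      rw [this, trace_smulRight_aux]
  -- the S-part
  have hGS : π ∘ₗ E ∘ₗ S.subtype = F - LinearMap.smulRight ((Y n).comp S.subtype) lsharp := by
    apply LinearMap.ext; intro x
    set w : S := F x - Y (x : V) n • lsharp with hw
    have hwprop : ∀ y : S, γ (w : V) (y : V) = Y (x : V) (y : V) - Y (x : V) n * ℓ (y : V) := by
      intro y
      simp only [hw, Submodule.coe_sub, Submodule.coe_smul, map_sub, map_smul,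
        LinearMap.sub_apply, LinearMap.smul_apply, smul_eq_mul]
      rw [hF x y, hlsharp y]
    have hYx := hfun (x : V) w hwprop
    have hEx := hkey (x : V) w hYx
    simp only [LinearMap.comp_apply, Submodule.subtype_apply, hEapp, hEx]
    rw [map_sub, map_smul, hπS w, hπn, smul_zero, sub_zero]
    simp only [hw, LinearMap.sub_apply, LinearMap.smul_apply, LinearMap.comp_apply,
      Submodule.subtype_apply, LinearMap.smulRight_apply]
    rw [hYsym (x : V) n]
  -- the n-part
  obtain ⟨w', hw'0⟩ := hΦsurj ((Y n).comp S.subtype - (Y n n) • ℓ.comp S.subtype)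
  have hw'prop : ∀ y : S, γ (w' : V) (y : V) = Y n (y : V) - Y n n * ℓ (y : V) := by
    intro y
    have := LinearMap.congr_fun hw'0 y
    simpa [hΦapp] using this
  have hYn := hfun n w' hw'prop
  have hEn := hkey n w' hYn
  have hlamEn : lam (E n) = -(ℓ (w' : V) + Y n n * ℓ2) := by
    rw [hEapp, hEn, map_sub, map_smul, hlamS w', hlamn, smul_eq_mul, mul_one, zero_sub]
  have hℓw' : ℓ (w' : V) = Y n (lsharp : V) - Y n n * ℓ (lsharp : V) := by
    rw [← hlsharp w', hγsym, hw'prop lsharp]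
  -- assemble
  rw [htr, hGS, map_sub, trace_smulRight_aux, hlamEn, hℓw']
  simp only [LinearMap.comp_apply, Submodule.subtype_apply]
  ring
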